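/- Under the constraints k in the Fermi ball, k+p outside, and e(k)+e(k+p) ≤ A|p|²ε², with |k| of order N^{1/3} (precisely ‖k‖ ≥ c ε^{-1} for some c > 0 with ε²μ-normalization), the angle θ between k and p satisfies |cos θ| ≤ C·A·|p|·ε for a constant C depending only on c and μ. -/

import Mathlib

/-- If `k` is in the Fermi ball, `k + p` outside it, `‖k‖ ≥ c/ε`, and the excitation
energies satisfy `e(k+p) + e(k) ≤ A‖p‖²ε²` (with `A` large enough, `A ≥ 1`),
then the angle `θ` between `k` and `p` satisfies `|cos θ| ≤ C A ‖p‖ ε`,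
with `C` depending only on `c` and `μ`. -/
theorem stmt_10 (c μ : ℝ) (hc : 0 < c) (hμ : 0 < μ) :
    ∃ C : ℝ, 0 < C ∧ ∀ (A ε : ℝ) (k p : EuclideanSpace ℝ (Fin 3)),
      1 ≤ A → 0 < ε → ε ≤ 1 → k ≠ 0 → p ≠ 0 →
      c / ε ≤ ‖k‖ →
      ε ^ 2 * ‖k‖ ^ 2 ≤ μ → μ < ε ^ 2 * ‖k + p‖ ^ 2 →
      |ε ^ 2 * ‖k + p‖ ^ 2 - μ| + |ε ^ 2 * ‖k‖ ^ 2 - μ| ≤ A * ‖p‖ ^ 2 * ε ^ 2 →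
      |(inner ℝ k p : ℝ)| / (‖k‖ * ‖p‖) ≤ C * A * ‖p‖ * ε := by
  refine ⟨1 / c, by positivity, ?_⟩
  intro A ε k p hA hε hε1 hk0 hp0 hck hin hout hee
  have hkpos : (0:ℝ) < ‖k‖ := norm_pos_iff.mpr hk0
  have hppos : (0:ℝ) < ‖p‖ := norm_pos_iff.mpr hp0
  have hsq : ‖k + p‖ ^ 2 = ‖k‖ ^ 2 + 2 * (inner ℝ k p : ℝ) + ‖p‖ ^ 2 :=
    norm_add_sq_real k p
  have h1 : |ε ^ 2 * ‖k + p‖ ^ 2 - μ| = ε ^ 2 * ‖k + p‖ ^ 2 - μ :=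
    abs_of_pos (by linarith)
  have h2 : |ε ^ 2 * ‖k‖ ^ 2 - μ| = μ - ε ^ 2 * ‖k‖ ^ 2 := by
    rw [abs_of_nonpos (by linarith)]; ring
  have hε2 : (0:ℝ) < ε ^ 2 := by positivity
  have hAp : ‖p‖ ^ 2 ≤ A * ‖p‖ ^ 2 := by nlinarith [sq_nonneg ‖p‖]
  have hupper : 2 * (inner ℝ k p : ℝ) ≤ A * ‖p‖ ^ 2 := by
    rw [h1, h2, hsq] at hee
    nlinarith
  have hlower : -(A * ‖p‖ ^ 2) ≤ 2 * (inner ℝ k p : ℝ) := by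
    have h : ε ^ 2 * ‖k‖ ^ 2 < ε ^ 2 * ‖k + p‖ ^ 2 := lt_of_le_of_lt hin hout
    have h' : ‖k‖ ^ 2 < ‖k + p‖ ^ 2 := by nlinarith
    nlinarith
  have habs : |(inner ℝ k p : ℝ)| ≤ A * ‖p‖ ^ 2 / 2 := by
    rw [abs_le]; constructor <;> linarith
  have hcε : (0:ℝ) < c / ε := by positivity
  have hdiv : |(inner ℝ k p : ℝ)| / (‖k‖ * ‖p‖) ≤ (A * ‖p‖ ^ 2 / 2) / ((c / ε) * ‖p‖) := by
    apply div_le_div₀ (by positivity) habs (by positivity)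
    exact mul_le_mul_of_nonneg_right hck hppos.le
  have hApε : (0:ℝ) < A * ‖p‖ * ε := by positivity
  calc |(inner ℝ k p : ℝ)| / (‖k‖ * ‖p‖) ≤ (A * ‖p‖ ^ 2 / 2) / ((c / ε) * ‖p‖) := hdiv
    _ = A * ‖p‖ * ε / c / 2 := by field_simp
    _ ≤ 1 / c * A * ‖p‖ * ε := by
        rw [div_le_iff₀ (by norm_num : (0:ℝ) < 2)]
        have h : 1 / c * A * ‖p‖ * ε = A * ‖p‖ * ε / c := by ring
        rw [h]
        have : A * ‖p‖ * ε / c ≤ A * ‖p‖ * ε / c * 2 := by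
          nlinarith [div_pos hApε hc]
        linarith
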